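/- The monoid M₃ = ⟨a,c | aca = c⟩ embeds into the monoid M₄ = ⟨a,b | aba² = ba⟩ via the map sending the generators a ↦ a and c ↦ ba. -/

import Mathlib

/-- The defining relation of `M₃ = ⟨a, c | aca = c⟩`, with `a` encoded as `true`
and `c` as `false`. -/
def rel3 : FreeMonoid Bool → FreeMonoid Bool → Prop :=
  fun u v => u = FreeMonoid.of true * FreeMonoid.of false * FreeMonoid.of true ∧
    v = FreeMonoid.of false

/-- The defining relation of `M₄ = ⟨a, b | aba² = ba⟩`, with `a` encoded as `true`
and `b` as `false`. -/
def rel4 : FreeMonoid Bool → FreeMonoid Bool → Prop :=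
  fun u v =>
    u = FreeMonoid.of true * FreeMonoid.of false * FreeMonoid.of true * FreeMonoid.of true ∧
      v = FreeMonoid.of false * FreeMonoid.of true

private lemma mk_eq_of_rel {α : Type*} (rels : FreeMonoid α → FreeMonoid α → Prop)
    {u v : FreeMonoid α} (h : conGen rels u v) :
    PresentedMonoid.mk rels u = PresentedMonoid.mk rels v :=
  Quotient.sound h

/-- `f : M₃ → M₄`, `a ↦ a`, `c ↦ ba`. -/
noncomputable def fM34 : PresentedMonoid rel3 →* PresentedMonoid rel4 :=
  PresentedMonoid.lift
    (fun x => if x then PresentedMonoid.of rel4 true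
      else PresentedMonoid.of rel4 false * PresentedMonoid.of rel4 true)
    (by
      rintro u v ⟨rfl, rfl⟩
      simp only [map_mul, FreeMonoid.lift_eval_of, if_true, Bool.false_eq_true, if_false]
      have : PresentedMonoid.mk rel4
          (FreeMonoid.of true * FreeMonoid.of false * FreeMonoid.of true * FreeMonoid.of true)
          = PresentedMonoid.mk rel4 (FreeMonoid.of false * FreeMonoid.of true) :=
        mk_eq_of_rel rel4 (ConGen.Rel.of _ _ ⟨rfl, rfl⟩)
      simpa only [map_mul, PresentedMonoid.of, mul_assoc] using this)

/-- `g : M₄ → M₃`, `a ↦ a`, `b ↦ ac`. -/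
noncomputable def gM43 : PresentedMonoid rel4 →* PresentedMonoid rel3 :=
  PresentedMonoid.lift
    (fun x => if x then PresentedMonoid.of rel3 true
      else PresentedMonoid.of rel3 true * PresentedMonoid.of rel3 false)
    (by
      rintro u v ⟨rfl, rfl⟩
      simp only [map_mul, FreeMonoid.lift_eval_of, if_true, Bool.false_eq_true, if_false]
      -- goal: a * (a*c) * a * a = (a*c) * a in M₃, i.e. a²ca² = aca ( = c both sides after rel)
      have h1 : conGen rel3 (FreeMonoid.of true * FreeMonoid.of false * FreeMonoid.of true)
          (FreeMonoid.of false) := ConGen.Rel.of _ _ ⟨rfl, rfl⟩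
      -- a²ca² = a(aca)a → a c a → c
      have h2 : conGen rel3
          (FreeMonoid.of true * (FreeMonoid.of true * FreeMonoid.of false * FreeMonoid.of true)
            * FreeMonoid.of true)
          (FreeMonoid.of true * FreeMonoid.of false * FreeMonoid.of true) :=
        ConGen.Rel.mul (ConGen.Rel.mul (ConGen.Rel.refl _) h1) (ConGen.Rel.refl _)
      have h3 : conGen rel3
          (FreeMonoid.of true * (FreeMonoid.of true * FreeMonoid.of false * FreeMonoid.of true)
            * FreeMonoid.of true)
          (FreeMonoid.of false) := ConGen.Rel.trans h2 h1
      have h4 : conGen rel3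
          (FreeMonoid.of true * (FreeMonoid.of true * FreeMonoid.of false) * FreeMonoid.of true
            * FreeMonoid.of true)
          (FreeMonoid.of true * FreeMonoid.of false * FreeMonoid.of true) := by
        have := ConGen.Rel.trans h3 (ConGen.Rel.symm h1)
        rw [show (FreeMonoid.of true * (FreeMonoid.of true * FreeMonoid.of false) * FreeMonoid.of true
            * FreeMonoid.of true : FreeMonoid Bool) = FreeMonoid.of true *
            (FreeMonoid.of true * FreeMonoid.of false * FreeMonoid.of true) * FreeMonoid.of true by
          simp only [mul_assoc]]
        exact this
      have : PresentedMonoid.mk rel3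
          (FreeMonoid.of true * (FreeMonoid.of true * FreeMonoid.of false) * FreeMonoid.of true
            * FreeMonoid.of true)
          = PresentedMonoid.mk rel3 (FreeMonoid.of true * FreeMonoid.of false * FreeMonoid.of true)
          := mk_eq_of_rel rel3 h4
      simpa only [map_mul, PresentedMonoid.of, mul_assoc] using this)

/-- The monoid `M₃ = ⟨a, c | aca = c⟩` embeds into `M₄ = ⟨a, b | aba² = ba⟩` via
`a ↦ a`, `c ↦ ba`. -/
theorem M3_embeds_in_M4 :
    ∃ f : PresentedMonoid rel3 →* PresentedMonoid rel4,
      Function.Injective f ∧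
        f (PresentedMonoid.of rel3 true) = PresentedMonoid.of rel4 true ∧
        f (PresentedMonoid.of rel3 false) =
          PresentedMonoid.of rel4 false * PresentedMonoid.of rel4 true := by
  refine ⟨fM34, ?_, rfl, rfl⟩
  have hgf : gM43.comp fM34 = MonoidHom.id _ := by
    apply PresentedMonoid.ext
    intro x
    cases x
    · -- x = false : g(f c) = g(ba) = (ac)a = aca = c
      show gM43 (PresentedMonoid.of rel4 false * PresentedMonoid.of rel4 true)
        = PresentedMonoid.of rel3 false
      have h1 : conGen rel3 (FreeMonoid.of true * FreeMonoid.of false * FreeMonoid.of true)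
          (FreeMonoid.of false) := ConGen.Rel.of _ _ ⟨rfl, rfl⟩
      have : PresentedMonoid.mk rel3
          (FreeMonoid.of true * FreeMonoid.of false * FreeMonoid.of true)
          = PresentedMonoid.mk rel3 (FreeMonoid.of false) := mk_eq_of_rel rel3 h1
      simp only [map_mul, gM43, PresentedMonoid.lift_of, eq_self_iff_true, if_true,
        Bool.false_eq_true, if_false]
      simpa only [map_mul, gM43, PresentedMonoid.lift_of, if_true, if_false,
        PresentedMonoid.of, mul_assoc] using this
    · rfl
  intro x y hxy
  have := congrArg gM43 hxy
  calc x = (gM43.comp fM34) x := by rw [hgf]; rfl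
    _ = (gM43.comp fM34) y := this
    _ = y := by rw [hgf]; rfl
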